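/- (Basic iterate relation for a mini-batch of projections) Let X ⊆ ℝ^d be a nonempty closed convex set and let Y_1,…,Y_b ⊆ ℝ^d be closed convex sets each containing X. Let f: ℝ^d → ℝ be convex and differentiable with L-Lipschitz continuous gradient on ℝ^d, and suppose ‖∇f(x)‖ ≤ G for all x ∈ X. Let v ∈ ℝ^d, α > 0, and define ψ⁰ = v − α∇f(v), ψ^r = Π_{Y_r}[ψ^{r−1}] for r = 1,…,b, and x⁺ = ψ^b. Then for any x̌ ∈ X, any z ∈ ℝ^d and any τ > 0: ‖x⁺ − x̌‖² ≤ (1 + A_τ α²)‖v − x̌‖² − 2α(f(z) − f(x̌)) − (3/4)‖ψ¹ − v‖² + (3/(8τ) + 2αL)‖v − z‖² + B_τ α² G², where A_τ = 8L² + 16τL² and B_τ = 8τ + 8. -/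

import Mathlib

open scoped RealInnerProductSpace

lemma proj_sq_le {E : Type*} [NormedAddCommGroup E] [InnerProductSpace ℝ E]
    {K : Set E} (hK : Convex ℝ K) {c p w : E} (hp : p ∈ K)
    (hmin : ∀ u ∈ K, ‖p - c‖ ≤ ‖u - c‖) (hw : w ∈ K) :
    ‖p - w‖ ^ 2 + ‖p - c‖ ^ 2 ≤ ‖c - w‖ ^ 2 := by
  have hbdd : BddBelow (Set.range fun u : K => ‖c - u‖) :=
    ⟨0, fun x ⟨u, hu⟩ => hu ▸ norm_nonneg _⟩
  haveI : Nonempty K := ⟨⟨p, hp⟩⟩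
  have hinf : ‖c - p‖ = ⨅ u : K, ‖c - (u : E)‖ := by
    refine le_antisymm (le_ciInf fun u => ?_) (ciInf_le hbdd ⟨p, hp⟩)
    rw [norm_sub_rev c p, norm_sub_rev c (u : E)]
    exact hmin u u.2
  have hobtuse : ⟪c - p, w - p⟫ ≤ 0 :=
    (norm_eq_iInf_iff_real_inner_le_zero hK hp).mp hinf w hw
  have h1 : c - w = (c - p) + (p - w) := by abel
  have h2 : ‖c - w‖ ^ 2 = ‖c - p‖ ^ 2 + 2 * ⟪c - p, p - w⟫ + ‖p - w‖ ^ 2 := by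
    rw [h1, norm_add_sq_real]
  have h3 : (p - w) = -(w - p) := by abel
  have h4 : ⟪c - p, p - w⟫ = -⟪c - p, w - p⟫ := by rw [h3, inner_neg_right]
  have h5 : ‖p - c‖ = ‖c - p‖ := norm_sub_rev _ _
  rw [h5]
  linarith

lemma convex_grad_ineq {E : Type*} [NormedAddCommGroup E] [InnerProductSpace ℝ E]
    [CompleteSpace E] {f : E → ℝ} {g : E → E}
    (hconv : ConvexOn ℝ Set.univ f) (hgrad : ∀ w, HasGradientAt f (g w) w)
    (w y : E) : f w + ⟪g w, y - w⟫ ≤ f y := by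
  set φ : ℝ → ℝ := fun t => f ((AffineMap.lineMap w y) t) with hφ
  have hφconv : ConvexOn ℝ Set.univ φ := by
    have := hconv.comp_affineMap (AffineMap.lineMap w y)
    rw [Set.preimage_univ] at this
    exact this
  have hline : ∀ t : ℝ, (AffineMap.lineMap w y) t = t • (y - w) + w := by
    intro t; simp [AffineMap.lineMap_apply]
  have hc : HasDerivAt (fun t : ℝ => (AffineMap.lineMap w y) t) (y - w) 0 := by
    have : HasDerivAt (fun t : ℝ => t • (y - w) + w) ((1:ℝ) • (y - w)) 0 :=
      ((hasDerivAt_id (0:ℝ)).smul_const (y - w)).add_const w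
    simpa [hline, one_smul] using this
  have hd : HasDerivAt φ ⟪g w, y - w⟫ 0 := by
    have hfd : HasFDerivAt f (InnerProductSpace.toDual ℝ E (g w)) ((AffineMap.lineMap w y) (0:ℝ)) := by
      simpa [hline] using (hgrad w).hasFDerivAt
    have := hfd.comp_hasDerivAt 0 hc
    simp [InnerProductSpace.toDual_apply_apply] at this
    exact this
  have hslope := hφconv.le_slope_of_hasDerivAt (Set.mem_univ (0:ℝ)) (Set.mem_univ (1:ℝ))
    one_pos hd
  have h0 : φ 0 = f w := by simp [hφ, hline]
  have h1 : φ 1 = f y := by simp [hφ, hline]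
  rw [slope_def_field] at hslope
  simp [h0, h1] at hslope
  linarith

lemma assemble_ineq (P Q S R W I a e γ α L G τ fv fx fz : ℝ)
    (hchainb : P ≤ Q) (hB : Q + R ≤ S)
    (hC : S = a ^ 2 - 2 * α * I + α ^ 2 * γ ^ 2)
    (hD : (3 / 4) * W ≤ R + 3 * α ^ 2 * γ ^ 2)
    (hαγ : 2 * α * (fv - fx) ≤ 2 * α * I)
    (hfz2 : 2 * α * (fz - fv) ≤ 2 * α * (γ * e + L * e ^ 2))
    (hH : 2 * α * γ * e ≤ 3 / (8 * τ) * e ^ 2 + (8 * τ / 3) * (α ^ 2 * γ ^ 2))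
    (hscaled : (8 * τ / 3 + 4) * (α ^ 2 * γ ^ 2)
      ≤ (8 * τ / 3 + 4) * (α ^ 2 * (2 * G ^ 2 + 2 * L ^ 2 * a ^ 2)))
    (hτLa : 0 ≤ τ * (L * α * a) ^ 2) (hτG : 0 ≤ τ * (α * G) ^ 2) :
    P ≤ (1 + (8 * L ^ 2 + 16 * τ * L ^ 2) * α ^ 2) * a ^ 2
      - 2 * α * (fz - fx) - (3 / 4) * W
      + (3 / (8 * τ) + 2 * α * L) * e ^ 2
      + (8 * τ + 8) * α ^ 2 * G ^ 2 := by
  linarith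

set_option maxHeartbeats 1600000 in
/-- **Basic iterate relation for a mini-batch of successive projections.**
Let `X ⊆ ℝ^d` be nonempty closed convex and `Y 1, …, Y b` closed convex sets containing `X`.
Let `f` be convex and differentiable with `L`-Lipschitz gradient `g` and `‖g x‖ ≤ G` on `X`.
Starting from `ψ 0 = v − α g(v)` and successively projecting, `ψ r = Π_{Y r}[ψ (r−1)]`,
the final point `x⁺ = ψ b` satisfies, for any `x̌ ∈ X`, `z ∈ ℝ^d` and `τ > 0`,
`‖x⁺ − x̌‖² ≤ (1 + A_τ α²)‖v − x̌‖² − 2α(f(z) − f(x̌)) − (3/4)‖ψ 1 − v‖²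
  + (3/(8τ) + 2αL)‖v − z‖² + B_τ α² G²`
with `A_τ = 8L² + 16τL²`, `B_τ = 8τ + 8`. -/
theorem minibatch_basic_iterate_relation {d : ℕ} (b : ℕ) (hb : 1 ≤ b)
    (X : Set (EuclideanSpace ℝ (Fin d)))
    (hXne : X.Nonempty) (hXclosed : IsClosed X) (hXconvex : Convex ℝ X)
    (Y : ℕ → Set (EuclideanSpace ℝ (Fin d)))
    (hYclosed : ∀ r, 1 ≤ r → r ≤ b → IsClosed (Y r))
    (hYconvex : ∀ r, 1 ≤ r → r ≤ b → Convex ℝ (Y r))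
    (hXY : ∀ r, 1 ≤ r → r ≤ b → X ⊆ Y r)
    (f : EuclideanSpace ℝ (Fin d) → ℝ)
    (g : EuclideanSpace ℝ (Fin d) → EuclideanSpace ℝ (Fin d))
    (hconv : ConvexOn ℝ Set.univ f)
    (hgrad : ∀ w, HasGradientAt f (g w) w)
    (L : ℝ) (hL : 0 ≤ L)
    (hLip : ∀ w w', ‖g w - g w'‖ ≤ L * ‖w - w'‖)
    (G : ℝ) (hG : ∀ x ∈ X, ‖g x‖ ≤ G)
    (v : EuclideanSpace ℝ (Fin d)) (α : ℝ) (hα : 0 < α)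
    (ψ : ℕ → EuclideanSpace ℝ (Fin d))
    (hψ0 : ψ 0 = v - α • g v)
    (hψ : ∀ r, 1 ≤ r → r ≤ b →
      ψ r ∈ Y r ∧ ∀ w ∈ Y r, ‖ψ r - ψ (r - 1)‖ ≤ ‖w - ψ (r - 1)‖)
    (xch : EuclideanSpace ℝ (Fin d)) (hxch : xch ∈ X)
    (z : EuclideanSpace ℝ (Fin d)) (τ : ℝ) (hτ : 0 < τ) :
    ‖ψ b - xch‖ ^ 2 ≤ (1 + (8 * L ^ 2 + 16 * τ * L ^ 2) * α ^ 2) * ‖v - xch‖ ^ 2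
      - 2 * α * (f z - f xch) - (3 / 4) * ‖ψ 1 - v‖ ^ 2
      + (3 / (8 * τ) + 2 * α * L) * ‖v - z‖ ^ 2
      + (8 * τ + 8) * α ^ 2 * G ^ 2 := by
  -- abbreviations
  set a := ‖v - xch‖ with ha
  set e := ‖v - z‖ with he
  set γ := ‖g v‖ with hγ
  have ha0 : 0 ≤ a := norm_nonneg _
  have he0 : 0 ≤ e := norm_nonneg _
  have hγ0 : 0 ≤ γ := norm_nonneg _
  -- Step A: chain of projections: ‖ψ r - xch‖² ≤ ‖ψ 1 - xch‖² for 1 ≤ r ≤ b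
  have hchain : ∀ r, 1 ≤ r → r ≤ b → ‖ψ r - xch‖ ^ 2 ≤ ‖ψ 1 - xch‖ ^ 2 := by
    intro r h1
    induction r, h1 using Nat.le_induction with
    | base => intro _; exact le_rfl
    | succ r hr ih =>
      intro h2
      have hrb : r ≤ b := le_trans (Nat.le_succ r) h2
      have hr1b : 1 ≤ r + 1 := by omega
      obtain ⟨hmem, hmin⟩ := hψ (r + 1) hr1b h2
      have hstep : ‖ψ (r + 1) - xch‖ ^ 2 ≤ ‖ψ (r + 1 - 1) - xch‖ ^ 2 := by
        have hproj := proj_sq_le (hYconvex (r + 1) hr1b h2) hmem hmin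
          (hXY (r + 1) hr1b h2 hxch)
        nlinarith [sq_nonneg ‖ψ (r + 1) - ψ (r + 1 - 1)‖]
      simp only [Nat.add_sub_cancel] at hstep
      exact le_trans hstep (ih hrb)
  -- Step B: first projection: ‖ψ 1 - xch‖² + ‖ψ 1 - ψ 0‖² ≤ ‖ψ 0 - xch‖²
  obtain ⟨hmem1, hmin1⟩ := hψ 1 le_rfl hb
  have hB : ‖ψ 1 - xch‖ ^ 2 + ‖ψ 1 - ψ 0‖ ^ 2 ≤ ‖ψ 0 - xch‖ ^ 2 := by
    have := proj_sq_le (hYconvex 1 le_rfl hb) hmem1 hmin1 (hXY 1 le_rfl hb hxch)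
    simpa using this
  -- Step C: expand ‖ψ 0 - xch‖²
  have hC : ‖ψ 0 - xch‖ ^ 2 = a ^ 2 - 2 * α * ⟪g v, v - xch⟫ + α ^ 2 * γ ^ 2 := by
    have h1 : ψ 0 - xch = (v - xch) - α • g v := by rw [hψ0]; abel
    rw [h1, norm_sub_sq_real, inner_smul_right, norm_smul]
    have : ⟪v - xch, g v⟫ = ⟪g v, v - xch⟫ := real_inner_comm _ _
    rw [this]
    simp [abs_of_pos hα]
    ring
  -- Step D: -‖ψ 1 - ψ 0‖² ≤ -(3/4)‖ψ 1 - v‖² + 3 α² γ²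
  have hD : (3 / 4) * ‖ψ 1 - v‖ ^ 2 ≤ ‖ψ 1 - ψ 0‖ ^ 2 + 3 * α ^ 2 * γ ^ 2 := by
    have h1 : ψ 1 - v = (ψ 1 - ψ 0) - α • g v := by rw [hψ0]; abel
    have h2 : ‖ψ 1 - v‖ ^ 2 = ‖ψ 1 - ψ 0‖ ^ 2 - 2 * ⟪ψ 1 - ψ 0, α • g v⟫ + α ^ 2 * γ ^ 2 := by
      rw [h1, norm_sub_sq_real, norm_smul]
      simp [abs_of_pos hα]
      ring
    have h3 : |⟪ψ 1 - ψ 0, α • g v⟫| ≤ ‖ψ 1 - ψ 0‖ * (α * γ) := by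
      have := abs_real_inner_le_norm (ψ 1 - ψ 0) (α • g v)
      rwa [norm_smul, Real.norm_eq_abs, abs_of_pos hα] at this
    have h4 : -⟪ψ 1 - ψ 0, α • g v⟫ ≤ ‖ψ 1 - ψ 0‖ * (α * γ) := by
      have := neg_abs_le ⟪ψ 1 - ψ 0, α • g v⟫
      linarith
    nlinarith [sq_nonneg (‖ψ 1 - ψ 0‖ - 3 * (α * γ)), sq_nonneg (α * γ)]
  -- Step E: convexity at v
  have hE : f v - f xch ≤ ⟪g v, v - xch⟫ := by
    have := convex_grad_ineq hconv hgrad v xch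
    have h1 : ⟪g v, xch - v⟫ = -⟪g v, v - xch⟫ := by
      rw [show xch - v = -(v - xch) by abel, inner_neg_right]
    linarith
  -- Step F: convexity at z plus Lipschitz: f z - f v ≤ γ e + L e²
  have hF : f z - f v ≤ γ * e + L * e ^ 2 := by
    have h1 := convex_grad_ineq hconv hgrad z v
    have h2 : -⟪g z, v - z⟫ ≤ ‖g z‖ * e := by
      have := abs_real_inner_le_norm (g z) (v - z)
      have := neg_abs_le ⟪g z, v - z⟫
      have h3 := abs_real_inner_le_norm (g z) (v - z)
      rw [← he] at h3
      linarith [neg_abs_le ⟪g z, v - z⟫]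
    have h4 : ‖g z‖ ≤ γ + L * e := by
      have h5 : ‖g z - g v‖ ≤ L * ‖z - v‖ := hLip z v
      have h6 : ‖z - v‖ = e := by rw [he, norm_sub_rev]
      calc ‖g z‖ = ‖g v + (g z - g v)‖ := by congr 1; abel
        _ ≤ γ + ‖g z - g v‖ := norm_add_le _ _
        _ ≤ γ + L * e := by rw [← h6]; linarith
    nlinarith [mul_le_mul_of_nonneg_right h4 he0]
  -- Step G: gradient bound at v
  have hGv : γ ≤ G + L * a := by
    have h5 : ‖g v - g xch‖ ≤ L * a := hLip v xch
    calc γ = ‖g xch + (g v - g xch)‖ := by rw [hγ]; congr 1; abel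
      _ ≤ ‖g xch‖ + ‖g v - g xch‖ := norm_add_le _ _
      _ ≤ G + L * a := add_le_add (hG xch hxch) h5
  have hG0 : 0 ≤ G := le_trans (norm_nonneg _) (hG xch hxch)
  have hγsq : γ ^ 2 ≤ 2 * G ^ 2 + 2 * L ^ 2 * a ^ 2 := by
    nlinarith [mul_le_mul hGv hGv hγ0 (le_trans hγ0 hGv), sq_nonneg (G - L * a)]
  -- Step H: Young's inequality 2 α γ e ≤ 3/(8τ) e² + (8τ/3) α² γ²
  have h8τ : (0:ℝ) < 8 * τ := by linarith
  have hH : 2 * α * γ * e ≤ 3 / (8 * τ) * e ^ 2 + (8 * τ / 3) * (α ^ 2 * γ ^ 2) := by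
    rw [div_mul_eq_mul_div, ← sub_le_iff_le_add, le_div_iff₀ h8τ]
    nlinarith [sq_nonneg (3 * e - 8 * τ * (α * γ)), sq_nonneg (α * γ)]
  -- Assemble
  have hchainb := hchain b hb le_rfl
  have h2α : (0:ℝ) ≤ 2 * α := by linarith
  have hαγ : 2 * α * (f v - f xch) ≤ 2 * α * ⟪g v, v - xch⟫ :=
    mul_le_mul_of_nonneg_left hE h2α
  have hfz2 : 2 * α * (f z - f v) ≤ 2 * α * (γ * e + L * e ^ 2) :=
    mul_le_mul_of_nonneg_left hF h2α
  have hmul : α ^ 2 * γ ^ 2 ≤ α ^ 2 * (2 * G ^ 2 + 2 * L ^ 2 * a ^ 2) :=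
    mul_le_mul_of_nonneg_left hγsq (sq_nonneg α)
  have hpos : (0:ℝ) ≤ 8 * τ / 3 + 4 := by linarith
  have hscaled : (8 * τ / 3 + 4) * (α ^ 2 * γ ^ 2)
      ≤ (8 * τ / 3 + 4) * (α ^ 2 * (2 * G ^ 2 + 2 * L ^ 2 * a ^ 2)) :=
    mul_le_mul_of_nonneg_left hmul hpos
  have hτLa : 0 ≤ τ * (L * α * a) ^ 2 := mul_nonneg hτ.le (sq_nonneg _)
  have hτG : 0 ≤ τ * (α * G) ^ 2 := mul_nonneg hτ.le (sq_nonneg _)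
  exact assemble_ineq (‖ψ b - xch‖ ^ 2) (‖ψ 1 - xch‖ ^ 2) (‖ψ 0 - xch‖ ^ 2)
    (‖ψ 1 - ψ 0‖ ^ 2) (‖ψ 1 - v‖ ^ 2) (⟪g v, v - xch⟫) a e γ α L G τ
    (f v) (f xch) (f z) hchainb hB hC hD hαγ hfz2 hH hscaled hτLa hτG
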